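/- If ρ is a separable state on H = H_A ⊗ H_B with operator Schmidt coefficients {μ_a}_{a=1}^{d}, then the product of the Schmidt coefficients satisfies M^[d](|ρ̃|) = Π_{a=1}^{d} μ_a ≤ (1/d)^d. -/

import Mathlib

open scoped Kronecker ComplexOrder
open Matrix Finset

/-- Hilbert-Schmidt inner product on matrices. -/
noncomputable def hsInner {n : Type*} [Fintype n] (A B : Matrix n n ℂ) : ℂ :=
  (Aᴴ * B).trace

/-- Hilbert-Schmidt norm. -/
noncomputable def hsNorm {n : Type*} [Fintype n] (A : Matrix n n ℂ) : ℝ :=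
  Real.sqrt (hsInner A A).re

/-- A density operator: positive semidefinite with unit trace. -/
def IsDensity {n : Type*} [Fintype n] (ρ : Matrix n n ℂ) : Prop :=
  ρ.PosSemidef ∧ ρ.trace = 1

/-- A separable bipartite state: a convex combination of product density operators. -/
def IsSeparableState {NA NB : ℕ} (ρ : Matrix (Fin NA × Fin NB) (Fin NA × Fin NB) ℂ) : Prop :=
  ∃ (m : ℕ) (p : Fin m → ℝ)
    (ρA : Fin m → Matrix (Fin NA) (Fin NA) ℂ) (ρB : Fin m → Matrix (Fin NB) (Fin NB) ℂ),
    (∀ i, 0 < p i) ∧ (∑ i, p i = 1) ∧ (∀ i, IsDensity (ρA i)) ∧ (∀ i, IsDensity (ρB i)) ∧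
    ρ = ∑ i, (p i : ℂ) • (ρA i ⊗ₖ ρB i)

/-- An operator Schmidt decomposition of a bipartite operator `C`:
`C = ∑ a, μ a • (E a ⊗ₖ F a)` with `μ a ≥ 0` and `E`, `F` orthonormal families
with respect to the Hilbert-Schmidt inner product. -/
def SchmidtDecomp {NA NB : ℕ} (C : Matrix (Fin NA × Fin NB) (Fin NA × Fin NB) ℂ)
    (μ : Fin (min (NA ^ 2) (NB ^ 2)) → ℝ)
    (E : Fin (min (NA ^ 2) (NB ^ 2)) → Matrix (Fin NA) (Fin NA) ℂ)
    (F : Fin (min (NA ^ 2) (NB ^ 2)) → Matrix (Fin NB) (Fin NB) ℂ) : Prop :=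
  (∀ a, 0 ≤ μ a) ∧
  (∀ a b, hsInner (E a) (E b) = if a = b then 1 else 0) ∧
  (∀ a b, hsInner (F a) (F b) = if a = b then 1 else 0) ∧
  C = ∑ a, (μ a : ℂ) • (E a ⊗ₖ F a)

section Aux

variable {n m : Type*} [Fintype n] [Fintype m]

private lemma hsInner_eq_sum' (A B : Matrix n n ℂ) :
    hsInner A B = ∑ p : n × n, (starRingEnd ℂ) (A p.1 p.2) * B p.1 p.2 := by
  simp [hsInner, Matrix.trace, Matrix.mul_apply, Matrix.diag, Matrix.conjTranspose_apply,
    ← Finset.sum_product']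
  exact Fintype.sum_equiv (Equiv.prodComm n n) _ _ (fun x => rfl)

omit [Fintype n] [Fintype m] in
private lemma kron_conjTranspose' (A : Matrix n n ℂ) (B : Matrix m m ℂ) :
    (A ⊗ₖ B)ᴴ = Aᴴ ⊗ₖ Bᴴ := by
  ext ⟨i, j⟩ ⟨k, l⟩
  simp [Matrix.conjTranspose_apply, Matrix.kroneckerMap_apply, mul_comm]

private lemma hsInner_kron' (A C : Matrix n n ℂ) (B D : Matrix m m ℂ) :
    hsInner (A ⊗ₖ B) (C ⊗ₖ D) = hsInner A C * hsInner B D := by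
  rw [hsInner, kron_conjTranspose', ← Matrix.mul_kronecker_mul, Matrix.trace_kronecker]
  rfl

private lemma hsInner_sum' {ι : Type*} (s : Finset ι) (A : Matrix n n ℂ) (B : ι → Matrix n n ℂ) :
    hsInner A (∑ i ∈ s, B i) = ∑ i ∈ s, hsInner A (B i) := by
  simp [hsInner, Matrix.mul_sum]

private lemma hsInner_smul' (A B : Matrix n n ℂ) (c : ℂ) :
    hsInner A (c • B) = c * hsInner A B := by
  simp [hsInner, Matrix.mul_smul]

/-- The matrix viewed as a Euclidean vector. -/
private noncomputable def toE (A : Matrix n n ℂ) : EuclideanSpace ℂ (n × n) := WithLp.toLp 2 (fun p : n × n => A p.1 p.2)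

private lemma inner_toE' (A B : Matrix n n ℂ) : (inner ℂ (toE A) (toE B) : ℂ) = hsInner A B := by
  rw [hsInner_eq_sum']
  simp [toE, PiLp.inner_apply, mul_comm]

private lemma trace_sq_le' [DecidableEq n] (ρ : Matrix n n ℂ)
    (h : ρ.PosSemidef) (ht : ρ.trace = 1) : ((ρ * ρ).trace).re ≤ 1 := by
  have hH := h.1
  have hspec := hH.spectral_theorem
  rw [Unitary.conjStarAlgAut_apply] at hspec
  set U : Matrix n n ℂ := (hH.eigenvectorUnitary : Matrix n n ℂ) with hU
  set lam := hH.eigenvalues with hlam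
  have hUU : star U * U = 1 := Matrix.mem_unitaryGroup_iff'.mp hH.eigenvectorUnitary.2
  set D : Matrix n n ℂ := diagonal (RCLike.ofReal ∘ lam) with hD
  have hstep : ρ * ρ = U * (D * D) * star U := by
    calc ρ * ρ = (U * D * star U) * (U * D * star U) := by rw [← hspec]
    _ = U * (D * ((star U * U) * (D * star U))) := by simp only [Matrix.mul_assoc]
    _ = U * (D * D) * star U := by rw [hUU, Matrix.one_mul]; simp only [Matrix.mul_assoc]
  have htr2 : (ρ * ρ).trace = ∑ i, ((lam i : ℂ) * (lam i : ℂ)) := by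
    rw [hstep, Matrix.trace_mul_cycle, ← Matrix.mul_assoc, hUU, Matrix.one_mul,
      hD, Matrix.diagonal_mul_diagonal, Matrix.trace_diagonal]
    simp
  have htr1 : ∑ i, lam i = 1 := by
    have : ρ.trace = ∑ i, (lam i : ℂ) := by
      rw [hspec, Matrix.trace_mul_cycle, hUU, Matrix.one_mul, hD, Matrix.trace_diagonal]
      simp
    rw [this] at ht
    exact_mod_cast (by exact_mod_cast ht : ((∑ i, lam i : ℝ) : ℂ) = ((1:ℝ):ℂ))
  have hnn : ∀ i, 0 ≤ lam i := fun i => h.eigenvalues_nonneg i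
  have : ((ρ * ρ).trace).re = ∑ i, (lam i)^2 := by
    rw [htr2]; push_cast [sq]; simp
  rw [this]
  calc ∑ i, (lam i)^2 ≤ (∑ i, lam i)^2 :=
        Finset.sum_sq_le_sq_sum_of_nonneg (fun i _ => hnn i)
  _ = 1 := by rw [htr1]; norm_num

/-- Bessel-type bound: for an HS-orthonormal family and a density matrix. -/
private lemma bessel_density [DecidableEq n] {ι : Type*} [Fintype ι] [DecidableEq ι]
    (E : ι → Matrix n n ℂ) (hE : ∀ a b, hsInner (E a) (E b) = if a = b then 1 else 0)
    (ρ : Matrix n n ℂ) (hρ : IsDensity ρ) :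
    ∑ a, ‖hsInner (E a) ρ‖ ^ 2 ≤ 1 := by
  have horth : Orthonormal ℂ (fun a => toE (E a)) := by
    rw [orthonormal_iff_ite]
    intro a b
    rw [inner_toE', hE]
  have hb := horth.sum_inner_products_le (s := Finset.univ) (toE ρ)
  have hnorm : ‖toE ρ‖ ^ 2 ≤ 1 := by
    rw [← inner_self_eq_norm_sq (𝕜 := ℂ), inner_toE']
    have hH : ρᴴ = ρ := hρ.1.1
    calc (hsInner ρ ρ).re = ((ρ * ρ).trace).re := by rw [hsInner, hH]
    _ ≤ 1 := trace_sq_le' ρ hρ.1 hρ.2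
  calc ∑ a, ‖hsInner (E a) ρ‖ ^ 2 = ∑ a, ‖(inner ℂ (toE (E a)) (toE ρ) : ℂ)‖ ^ 2 := by
        simp_rw [inner_toE']
  _ ≤ ‖toE ρ‖ ^ 2 := hb
  _ ≤ 1 := hnorm

end Aux

/-- For a separable state, the product of the Schmidt coefficients is at most (1/d)^d. -/
theorem stmt9_product_schmidt_coefficients_bound {NA NB : ℕ} (hA : 2 ≤ NA) (hB : 2 ≤ NB)
    (ρ : Matrix (Fin NA × Fin NB) (Fin NA × Fin NB) ℂ)
    (hsep : IsSeparableState ρ)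
    (μ : Fin (min (NA ^ 2) (NB ^ 2)) → ℝ)
    (E : Fin (min (NA ^ 2) (NB ^ 2)) → Matrix (Fin NA) (Fin NA) ℂ)
    (F : Fin (min (NA ^ 2) (NB ^ 2)) → Matrix (Fin NB) (Fin NB) ℂ)
    (hS : SchmidtDecomp ρ μ E F) :
    ∏ a, μ a ≤ (1 / (min (NA ^ 2) (NB ^ 2) : ℝ)) ^ (min (NA ^ 2) (NB ^ 2)) := by
  classical
  obtain ⟨hμ0, hE, hF, hμρ⟩ := hS
  obtain ⟨m, p, ρA, ρB, hp, hpsum, hρA, hρB, hρ⟩ := hsep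
  have hd0 : 0 < min (NA ^ 2) (NB ^ 2) := lt_min (pow_pos (by omega) 2) (pow_pos (by omega) 2)
  have hD0 : (0:ℝ) < ((min (NA ^ 2) (NB ^ 2) : ℕ) : ℝ) := by exact_mod_cast hd0
  -- Step 1: extract each Schmidt coefficient as an inner product.
  have key : ∀ a, (μ a : ℂ) =
      ∑ i, (p i : ℂ) * (hsInner (E a) (ρA i) * hsInner (F a) (ρB i)) := by
    intro a
    have h1 : hsInner (E a ⊗ₖ F a) ρ = (μ a : ℂ) := by
      rw [hμρ, hsInner_sum']
      rw [Finset.sum_eq_single a]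
      · rw [hsInner_smul', hsInner_kron', hE, hF]; simp
      · intro b _ hb
        rw [hsInner_smul', hsInner_kron', hE, hF]
        simp [Ne.symm hb]
      · simp
    have h2 : hsInner (E a ⊗ₖ F a) ρ =
        ∑ i, (p i : ℂ) * (hsInner (E a) (ρA i) * hsInner (F a) (ρB i)) := by
      rw [hρ, hsInner_sum']
      refine Finset.sum_congr rfl fun i _ => ?_
      rw [hsInner_smul', hsInner_kron']
    rw [← h1, h2]
  -- Step 2: the sum of Schmidt coefficients is at most 1 (realignment bound).
  have hCS : ∀ i : Fin m, ∑ a, ‖hsInner (E a) (ρA i)‖ * ‖hsInner (F a) (ρB i)‖ ≤ 1 := by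
    intro i
    have hx : ∑ a, ‖hsInner (E a) (ρA i)‖ ^ 2 ≤ 1 := bessel_density E hE (ρA i) (hρA i)
    have hy : ∑ a, ‖hsInner (F a) (ρB i)‖ ^ 2 ≤ 1 := bessel_density F hF (ρB i) (hρB i)
    calc ∑ a, ‖hsInner (E a) (ρA i)‖ * ‖hsInner (F a) (ρB i)‖
        ≤ Real.sqrt (∑ a, ‖hsInner (E a) (ρA i)‖ ^ 2) *
          Real.sqrt (∑ a, ‖hsInner (F a) (ρB i)‖ ^ 2) :=
          Real.sum_mul_le_sqrt_mul_sqrt _ _ _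
    _ ≤ Real.sqrt 1 * Real.sqrt 1 :=
          mul_le_mul (Real.sqrt_le_sqrt hx) (Real.sqrt_le_sqrt hy)
            (Real.sqrt_nonneg _) (Real.sqrt_nonneg _)
    _ = 1 := by simp
  have hsum : ∑ a, μ a ≤ 1 := by
    have step1 : ∀ a, μ a ≤ ∑ i, p i * (‖hsInner (E a) (ρA i)‖ * ‖hsInner (F a) (ρB i)‖) := by
      intro a
      have h0 : μ a = ‖(μ a : ℂ)‖ := by
        rw [Complex.norm_real, Real.norm_eq_abs, abs_of_nonneg (hμ0 a)]
      rw [h0, key a]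
      calc ‖∑ i, (p i : ℂ) * (hsInner (E a) (ρA i) * hsInner (F a) (ρB i))‖
          ≤ ∑ i, ‖(p i : ℂ) * (hsInner (E a) (ρA i) * hsInner (F a) (ρB i))‖ :=
            norm_sum_le _ _
      _ = ∑ i, p i * (‖hsInner (E a) (ρA i)‖ * ‖hsInner (F a) (ρB i)‖) := by
            refine Finset.sum_congr rfl fun i _ => ?_
            rw [norm_mul, norm_mul, Complex.norm_real, Real.norm_eq_abs,
              abs_of_nonneg (hp i).le]
    calc ∑ a, μ a ≤ ∑ a, ∑ i, p i * (‖hsInner (E a) (ρA i)‖ * ‖hsInner (F a) (ρB i)‖) :=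
          Finset.sum_le_sum fun a _ => step1 a
    _ = ∑ i, p i * ∑ a, ‖hsInner (E a) (ρA i)‖ * ‖hsInner (F a) (ρB i)‖ := by
          rw [Finset.sum_comm]; simp [Finset.mul_sum]
    _ ≤ ∑ i, p i * 1 := Finset.sum_le_sum fun i _ =>
          mul_le_mul_of_nonneg_left (hCS i) (hp i).le
    _ = 1 := by simpa using hpsum
  -- Step 3: AM-GM.
  have hw : ∑ _a : Fin (min (NA ^ 2) (NB ^ 2)),
      (1:ℝ)/((min (NA ^ 2) (NB ^ 2) : ℕ) : ℝ) = 1 := by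
    rw [Finset.sum_const, Finset.card_univ, Fintype.card_fin, nsmul_eq_mul]
    field_simp
  have geo := Real.geom_mean_le_arith_mean_weighted Finset.univ
    (fun _ => (1:ℝ)/((min (NA ^ 2) (NB ^ 2) : ℕ) : ℝ)) μ
    (fun i _ => by positivity) hw (fun i _ => hμ0 i)
  have geo2 : ∏ a, μ a ^ ((1:ℝ)/((min (NA ^ 2) (NB ^ 2) : ℕ) : ℝ)) ≤
      1/((min (NA ^ 2) (NB ^ 2) : ℕ) : ℝ) := by
    refine geo.trans ?_
    calc ∑ a, (1:ℝ)/((min (NA ^ 2) (NB ^ 2) : ℕ) : ℝ) * μ a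
        = (1/((min (NA ^ 2) (NB ^ 2) : ℕ) : ℝ)) * ∑ a, μ a := by rw [Finset.mul_sum]
    _ ≤ (1/((min (NA ^ 2) (NB ^ 2) : ℕ) : ℝ)) * 1 :=
          mul_le_mul_of_nonneg_left hsum (by positivity)
    _ = 1/((min (NA ^ 2) (NB ^ 2) : ℕ) : ℝ) := by ring
  have hprod : ∏ a, μ a =
      (∏ a, μ a ^ ((1:ℝ)/((min (NA ^ 2) (NB ^ 2) : ℕ) : ℝ))) ^ (min (NA ^ 2) (NB ^ 2)) := by
    rw [← Finset.prod_pow]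
    refine Finset.prod_congr rfl fun a _ => ?_
    rw [← Real.rpow_natCast (μ a ^ ((1:ℝ)/((min (NA ^ 2) (NB ^ 2) : ℕ) : ℝ))) _,
      ← Real.rpow_mul (hμ0 a), one_div_mul_cancel hD0.ne', Real.rpow_one]
  have hcast : ((min (NA ^ 2) (NB ^ 2) : ℕ) : ℝ) = (min (NA ^ 2) (NB ^ 2) : ℝ) := by
    push_cast
    rfl
  rw [hprod, ← hcast]
  exact pow_le_pow_left₀ (Finset.prod_nonneg fun a _ => Real.rpow_nonneg (hμ0 a) _) geo2 _
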